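/- For any convex system of means M, one has M((1/2, 1/2), (1, 0)) ≥ 1/2. -/

import Mathlib

open scoped NNReal ENNReal BigOperators

/-- The power mean `M_p` of order `p ∈ [0,∞]` with weights `w` and arguments `x`. -/
noncomputable def powerMean (p : ℝ≥0∞) {n : ℕ} (w x : Fin n → ℝ≥0) : ℝ≥0 :=
  if p = ∞ then (Finset.univ.filter (fun i => 0 < w i)).sup x
  else if p = 0 then ∏ i, x i ^ ((w i : ℝ))
  else (∑ i, w i * x i ^ p.toReal) ^ (1 / p.toReal)

/-- A system of means: for each `n`, a function `M n : Δ_n × ℝ≥0ⁿ → ℝ≥0`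
(defined on all of `ℝ≥0ⁿ × ℝ≥0ⁿ`, with the axioms demanded only when `∑ w = 1`),
satisfying functoriality, consistency and monotonicity. -/
structure MeanSystem where
  M : ∀ n : ℕ, (Fin n → ℝ≥0) → (Fin n → ℝ≥0) → ℝ≥0
  functorial : ∀ {m n : ℕ} (f : Fin m → Fin n) (w : Fin m → ℝ≥0),
    (∑ i, w i) = 1 → ∀ x : Fin n → ℝ≥0,
      M n (fun j => ∑ i ∈ Finset.univ.filter (fun i => f i = j), w i) x = M m w (x ∘ f)
  consistent : ∀ c : ℝ≥0, M 1 (fun _ => 1) (fun _ => c) = c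
  mono : ∀ {n : ℕ} (w x y : Fin n → ℝ≥0), (∑ i, w i) = 1 →
    (∀ i, x i ≤ y i) → M n w x ≤ M n w y

/-- Multiplicativity of a system of means, with respect to the fixed bijection
`finProdFinEquiv : Fin m × Fin n ≃ Fin (m * n)`. -/
def MeanSystem.IsMultiplicative (S : MeanSystem) : Prop :=
  ∀ {m n : ℕ} (w x : Fin m → ℝ≥0) (v y : Fin n → ℝ≥0),
    (∑ i, w i) = 1 → (∑ j, v j) = 1 →
    S.M (m * n) (fun k => w (finProdFinEquiv.symm k).1 * v (finProdFinEquiv.symm k).2)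
        (fun k => x (finProdFinEquiv.symm k).1 * y (finProdFinEquiv.symm k).2)
      = S.M m w x * S.M n v y

/-- Convexity of a system of means. -/
def MeanSystem.IsConvex (S : MeanSystem) : Prop :=
  ∀ {n : ℕ} (w x y : Fin n → ℝ≥0), (∑ i, w i) = 1 →
    S.M n w (fun i => (x i + y i) / 2) ≤ max (S.M n w x) (S.M n w y)

/-- For any convex system of means, `M((1/2, 1/2), (1, 0)) ≥ 1/2`. -/
theorem meanSystem_half_le (S : MeanSystem) (hconv : S.IsConvex) :
    (1 / 2 : ℝ≥0) ≤ S.M 2 ![1/2, 1/2] ![1, 0] := by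
  set w : Fin 2 → ℝ≥0 := ![1/2, 1/2] with hw
  have h2 : (2:ℝ≥0)⁻¹ + 2⁻¹ = 1 := by
    rw [← two_mul, mul_inv_cancel₀]; norm_num
  have hsum : (∑ i, w i) = 1 := by
    simp [hw, Fin.sum_univ_two, h2]
  -- swap symmetry
  have hswap : S.M 2 w ![1, 0] = S.M 2 w ![0, 1] := by
    have := S.functorial (m := 2) (n := 2) ![1, 0] w hsum ![1, 0]
    have hweq : (fun j => ∑ i ∈ Finset.univ.filter (fun i => (![1, 0] : Fin 2 → Fin 2) i = j), w i) = w := by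
      funext j
      fin_cases j <;> simp [Finset.sum_filter, Fin.sum_univ_two, hw]
    rw [hweq] at this
    have hxeq : ((![1, 0] : Fin 2 → ℝ≥0) ∘ (![1, 0] : Fin 2 → Fin 2)) = ![0, 1] := by
      funext i; fin_cases i <;> rfl
    rw [hxeq] at this
    exact this
  -- constant value
  have hconst : S.M 2 w (fun _ => (1/2 : ℝ≥0)) = 1/2 := by
    have := S.functorial (m := 2) (n := 1) (fun _ => 0) w hsum (fun _ => (1/2 : ℝ≥0))
    have hweq : (fun j : Fin 1 => ∑ i ∈ Finset.univ.filter (fun i => (fun _ : Fin 2 => (0 : Fin 1)) i = j), w i) = (fun _ : Fin 1 => (1 : ℝ≥0)) := by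
      funext j
      have : j = 0 := Subsingleton.elim _ _
      subst this
      simpa using hsum
    rw [hweq] at this
    have : S.M 2 w ((fun _ : Fin 1 => (1/2 : ℝ≥0)) ∘ (fun _ : Fin 2 => (0 : Fin 1))) = 1/2 := by
      rw [← this]; exact S.consistent _
    simpa [Function.comp_def] using this
  have hcv := hconv w ![1, 0] ![0, 1] hsum
  have hmid : (fun i => ((![1, 0] : Fin 2 → ℝ≥0) i + (![0, 1] : Fin 2 → ℝ≥0) i) / 2) = (fun _ => (1/2 : ℝ≥0)) := by
    funext i; fin_cases i <;> simp
  rw [hmid, hconst, ← hswap, max_self] at hcv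
  exact hcv
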